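/- With q ≥ 5 and k_{1,2}'(t) = -(q-2)log 2 + log(t/(1-(q-1)t)) + (q-2)log((1-(q-2)t)/(1-(q-1)t)) on (0,1/q): k_{1,2}' is increasing on (0,1/q), and k_{1,2}'(t) ≤ k_{1,2}'(1/q⁻) = 0; consequently k_1(t) ≥ k_2(t) for all t ∈ (0, 1/q), with equality in the limit t → 1/q. -/

import Mathlib

open Real Set Filter

/-- The derivative `k_{1,2}'` is increasing on `(0,1/q)`, nonpositive there
(with limiting value `0` at `1/q`), hence `k₁ ≥ k₂` on `(0,1/q)` with equality
in the limit `t → 1/q`. -/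
theorem k12_monotone_and_nonpos (q : ℕ) (hq : 5 ≤ q)
    (k₁ k₂ D : ℝ → ℝ)
    (hk₁ : ∀ t : ℝ, k₁ t =
      (1 - ((q : ℝ) - 1) * t) * Real.log ((1 - ((q : ℝ) - 1) * t) / t) + Real.log t)
    (hk₂ : ∀ t : ℝ, k₂ t =
      (1 - ((q : ℝ) - 2) * t) * Real.log ((1 - ((q : ℝ) - 2) * t) / (2 * t)) + Real.log t)
    (hD : ∀ t : ℝ, D t =
      -((q : ℝ) - 2) * Real.log 2 + Real.log (t / (1 - ((q : ℝ) - 1) * t))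
        + ((q : ℝ) - 2) * Real.log ((1 - ((q : ℝ) - 2) * t) / (1 - ((q : ℝ) - 1) * t))) :
    StrictMonoOn D (Set.Ioo (0 : ℝ) (1 / (q : ℝ))) ∧
    D (1 / (q : ℝ)) = 0 ∧
    (∀ t ∈ Set.Ioo (0 : ℝ) (1 / (q : ℝ)), D t ≤ 0) ∧
    (∀ t ∈ Set.Ioo (0 : ℝ) (1 / (q : ℝ)), k₂ t ≤ k₁ t) ∧
    Tendsto (fun t => k₁ t - k₂ t)
      (nhdsWithin (1 / (q : ℝ)) (Set.Iio (1 / (q : ℝ)))) (nhds 0) := by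
  have hc5 : (5:ℝ) ≤ (q:ℝ) := by exact_mod_cast hq
  set c : ℝ := (q:ℝ) with hc
  have hc0 : 0 < c := by linarith
  have hc1 : 0 < c - 1 := by linarith
  have hc2 : 0 < c - 2 := by linarith
  set U : Set ℝ := Ioo (0:ℝ) (1/(c-1)) with hUdef
  have hUopen : IsOpen U := isOpen_Ioo
  have hmemU : ∀ t, t ∈ U → 0 < t ∧ 0 < 1 - (c-1)*t ∧ 0 < 1 - (c-2)*t := by
    intro t ht
    obtain ⟨h1, h2⟩ := ht
    have h3 : (c-1)*t < 1 := by
      have := (lt_div_iff₀ hc1).mp h2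
      linarith
    refine ⟨h1, by linarith, by nlinarith⟩
  have hsub : Ioc (0:ℝ) (1/c) ⊆ U := by
    intro t ht
    obtain ⟨h1, h2⟩ := ht
    refine ⟨h1, lt_of_le_of_lt h2 ?_⟩
    exact one_div_lt_one_div_of_lt hc1 (by linarith)
  -- derivative of D
  have hDderiv : ∀ t ∈ U, HasDerivAt D
      (t⁻¹ + (c-1)/(1-(c-1)*t) + (c-2)*((c-1)/(1-(c-1)*t) - (c-2)/(1-(c-2)*t))) t := by
    intro t htU
    obtain ⟨ht, hu, hv⟩ := hmemU t htU
    have hlin1 : HasDerivAt (fun x : ℝ => 1 - (c-1)*x) (-(c-1)) t := by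
      simpa using ((hasDerivAt_id t).const_mul (c-1)).const_sub (1:ℝ)
    have hlin2 : HasDerivAt (fun x : ℝ => 1 - (c-2)*x) (-(c-2)) t := by
      simpa using ((hasDerivAt_id t).const_mul (c-2)).const_sub (1:ℝ)
    have hlog1 : HasDerivAt (fun x : ℝ => Real.log (1 - (c-1)*x)) (-(c-1)/(1-(c-1)*t)) t := by
      have := (Real.hasDerivAt_log hu.ne').comp t hlin1
      simpa [div_eq_inv_mul, Function.comp_def] using this
    have hlog2 : HasDerivAt (fun x : ℝ => Real.log (1 - (c-2)*x)) (-(c-2)/(1-(c-2)*t)) t := by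
      have := (Real.hasDerivAt_log hv.ne').comp t hlin2
      simpa [div_eq_inv_mul, Function.comp_def] using this
    have hlogt : HasDerivAt Real.log t⁻¹ t := Real.hasDerivAt_log ht.ne'
    have hG : HasDerivAt (fun x => -(c-2)*Real.log 2 + (Real.log x - Real.log (1-(c-1)*x))
        + (c-2)*(Real.log (1-(c-2)*x) - Real.log (1-(c-1)*x)))
        (0 + (t⁻¹ - -(c-1)/(1-(c-1)*t)) + (c-2)*(-(c-2)/(1-(c-2)*t) - -(c-1)/(1-(c-1)*t))) t :=
      ((hasDerivAt_const t _).add (hlogt.sub hlog1)).add ((hlog2.sub hlog1).const_mul (c-2))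
    have heq : D =ᶠ[nhds t] fun x => -(c-2)*Real.log 2 + (Real.log x - Real.log (1-(c-1)*x))
        + (c-2)*(Real.log (1-(c-2)*x) - Real.log (1-(c-1)*x)) := by
      filter_upwards [hUopen.mem_nhds htU] with x hx
      obtain ⟨hx0, hxu, hxv⟩ := hmemU x hx
      rw [hD x, Real.log_div hx0.ne' hxu.ne', Real.log_div hxv.ne' hxu.ne']
    have h := hG.congr_of_eventuallyEq heq
    refine h.congr_deriv ?_
    ring
  have hDpos : ∀ t ∈ Ioo (0:ℝ) (1/c),
      0 < t⁻¹ + (c-1)/(1-(c-1)*t) + (c-2)*((c-1)/(1-(c-1)*t) - (c-2)/(1-(c-2)*t)) := by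
    intro t ht
    obtain ⟨ht0, htc⟩ := ht
    have hct : c * t < 1 := by
      have := (lt_div_iff₀ hc0).mp htc
      linarith
    have hu : 0 < 1 - (c-1)*t := by nlinarith
    have hv : 0 < 1 - (c-2)*t := by nlinarith
    have key : t⁻¹ + (c-1)/(1-(c-1)*t) + (c-2)*((c-1)/(1-(c-1)*t) - (c-2)/(1-(c-2)*t))
        = ((1-(c-1)*t)*(1-(c-2)*t) + (c-1)^2*t*(1-(c-2)*t) - (c-2)^2*t*(1-(c-1)*t))
          / (t*((1-(c-1)*t)*(1-(c-2)*t))) := by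
      generalize 1-(c-1)*t = u at *
      generalize 1-(c-2)*t = v at *
      field_simp
      ring
    rw [key]
    apply div_pos
    · nlinarith [mul_pos hu hv, mul_pos ht0 hc0, sq_nonneg (c*t), mul_pos hc0 ht0]
    · exact mul_pos ht0 (mul_pos hu hv)
  have hint : interior (Ioc (0:ℝ) (1/c)) = Ioo (0:ℝ) (1/c) := interior_Ioc
  have hmono : StrictMonoOn D (Ioc (0:ℝ) (1/c)) := by
    apply strictMonoOn_of_deriv_pos (convex_Ioc _ _)
    · exact fun t ht => ((hDderiv t (hsub ht)).continuousAt).continuousWithinAt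
    · intro x hx
      rw [hint] at hx
      rw [(hDderiv x (hsub (Ioo_subset_Ioc_self hx))).deriv]
      exact hDpos x hx
  have hq0 : (0:ℝ) < 1/c := by positivity
  have hqIoc : (1/c) ∈ Ioc (0:ℝ) (1/c) := ⟨hq0, le_refl _⟩
  have e1 : 1 - (c-1)*(1/c) = 1/c := by field_simp; ring
  have e2 : 1 - (c-2)*(1/c) = 2/c := by field_simp; ring
  have hDq : D (1/c) = 0 := by
    rw [hD, e1, e2, div_self (by positivity : (1:ℝ)/c ≠ 0),
      (show (2/c)/(1/c) = 2 by field_simp), Real.log_one]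
    ring
  have hDle : ∀ t ∈ Ioo (0:ℝ) (1/c), D t ≤ 0 := by
    intro t ht
    have := hmono (Ioo_subset_Ioc_self ht) hqIoc ht.2
    linarith [hDq ▸ this]
  -- F = k₁ - k₂
  set F : ℝ → ℝ := fun t => k₁ t - k₂ t with hFdef
  have hFderiv : ∀ t ∈ U, HasDerivAt F (D t) t := by
    intro t htU
    obtain ⟨ht, hu, hv⟩ := hmemU t htU
    have hlin1 : HasDerivAt (fun x : ℝ => 1 - (c-1)*x) (-(c-1)) t := by
      simpa using ((hasDerivAt_id t).const_mul (c-1)).const_sub (1:ℝ)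
    have hlin2 : HasDerivAt (fun x : ℝ => 1 - (c-2)*x) (-(c-2)) t := by
      simpa using ((hasDerivAt_id t).const_mul (c-2)).const_sub (1:ℝ)
    have hlog1 : HasDerivAt (fun x : ℝ => Real.log (1 - (c-1)*x)) (-(c-1)/(1-(c-1)*t)) t := by
      have := (Real.hasDerivAt_log hu.ne').comp t hlin1
      simpa [div_eq_inv_mul, Function.comp_def] using this
    have hlog2 : HasDerivAt (fun x : ℝ => Real.log (1 - (c-2)*x)) (-(c-2)/(1-(c-2)*t)) t := by
      have := (Real.hasDerivAt_log hv.ne').comp t hlin2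
      simpa [div_eq_inv_mul, Function.comp_def] using this
    have hlogt : HasDerivAt Real.log t⁻¹ t := Real.hasDerivAt_log ht.ne'
    have hp1 : HasDerivAt (fun x : ℝ => (1-(c-1)*x) * (Real.log (1-(c-1)*x) - Real.log x))
        (-(c-1) * (Real.log (1-(c-1)*t) - Real.log t)
          + (1-(c-1)*t) * (-(c-1)/(1-(c-1)*t) - t⁻¹)) t :=
      hlin1.mul (hlog1.sub hlogt)
    have hp2 : HasDerivAt (fun x : ℝ => (1-(c-2)*x) * (Real.log (1-(c-2)*x) - Real.log 2 - Real.log x))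
        (-(c-2) * (Real.log (1-(c-2)*t) - Real.log 2 - Real.log t)
          + (1-(c-2)*t) * (-(c-2)/(1-(c-2)*t) - t⁻¹)) t := by
      have h2 : HasDerivAt (fun x : ℝ => Real.log (1-(c-2)*x) - Real.log 2 - Real.log x)
          (-(c-2)/(1-(c-2)*t) - 0 - t⁻¹) t :=
        (hlog2.sub (hasDerivAt_const t _)).sub hlogt
      have := hlin2.mul h2
      refine this.congr_deriv ?_
      ring
    have hG : HasDerivAt (fun x : ℝ =>
        ((1-(c-1)*x) * (Real.log (1-(c-1)*x) - Real.log x) + Real.log x)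
        - ((1-(c-2)*x) * (Real.log (1-(c-2)*x) - Real.log 2 - Real.log x) + Real.log x))
        ((-(c-1) * (Real.log (1-(c-1)*t) - Real.log t)
          + (1-(c-1)*t) * (-(c-1)/(1-(c-1)*t) - t⁻¹) + t⁻¹)
        - (-(c-2) * (Real.log (1-(c-2)*t) - Real.log 2 - Real.log t)
          + (1-(c-2)*t) * (-(c-2)/(1-(c-2)*t) - t⁻¹) + t⁻¹)) t :=
      (hp1.add hlogt).sub (hp2.add hlogt)
    have heq : F =ᶠ[nhds t] fun x =>
        ((1-(c-1)*x) * (Real.log (1-(c-1)*x) - Real.log x) + Real.log x)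
        - ((1-(c-2)*x) * (Real.log (1-(c-2)*x) - Real.log 2 - Real.log x) + Real.log x) := by
      filter_upwards [hUopen.mem_nhds htU] with x hx
      obtain ⟨hx0, hxu, hxv⟩ := hmemU x hx
      simp only [hFdef]
      rw [hk₁, hk₂, Real.log_div hxu.ne' hx0.ne',
        Real.log_div hxv.ne' (by positivity : (2:ℝ)*x ≠ 0),
        Real.log_mul two_ne_zero hx0.ne']
      ring
    have h := hG.congr_of_eventuallyEq heq
    refine h.congr_deriv ?_
    rw [hD, Real.log_div ht.ne' hu.ne', Real.log_div hv.ne' hu.ne']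
    rw [mul_sub (1 - (c - 1) * t), mul_sub (1 - (c - 2) * t), mul_div_cancel₀ _ hu.ne', mul_div_cancel₀ _ hv.ne']
    field_simp
    ring
  have hFanti : AntitoneOn F (Ioc (0:ℝ) (1/c)) := by
    apply antitoneOn_of_deriv_nonpos (convex_Ioc _ _)
    · exact fun t ht => ((hFderiv t (hsub ht)).continuousAt).continuousWithinAt
    · intro x hx
      rw [hint] at hx
      exact ((hFderiv x (hsub (Ioo_subset_Ioc_self hx))).differentiableAt).differentiableWithinAt
    · intro x hx
      rw [hint] at hx
      rw [(hFderiv x (hsub (Ioo_subset_Ioc_self hx))).deriv]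
      exact hDle x hx
  have hF0 : F (1/c) = 0 := by
    simp only [hFdef]
    rw [hk₁, hk₂, e1, e2, div_self (by positivity : (1:ℝ)/c ≠ 0),
      (show (2/c)/(2*(1/c)) = 1 by field_simp), Real.log_one]
    ring
  have hk2le : ∀ t ∈ Ioo (0:ℝ) (1/c), k₂ t ≤ k₁ t := by
    intro t ht
    have := hFanti (Ioo_subset_Ioc_self ht) hqIoc ht.2.le
    rw [hF0] at this
    simpa [hFdef, sub_nonneg] using this
  have hqU : (1/c) ∈ U := ⟨hq0, one_div_lt_one_div_of_lt hc1 (by linarith)⟩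
  refine ⟨hmono.mono Ioo_subset_Ioc_self, hDq, hDle, hk2le, ?_⟩
  have hcontF : ContinuousAt F (1/c) := (hFderiv _ hqU).continuousAt
  have h := hcontF.continuousWithinAt (s := Iio (1/c)) |>.tendsto
  rw [hF0] at h
  exact h
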